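/- Let q be a power of 2, n | q−1, and α ∈ F_q a primitive n-th root of unity. Let D be a nonzero cyclic code of length n over F_q with complete defining set Z(D). Let p and p+2 be two positive integers that both divide n, and assume there exists an integer l such that (i) {α^i : l·p(p+2) − (p−1) ≤ i ≤ l·p(p+2) + (p−1)} ⊆ Z(D), and (ii) the symmetric difference G_p △ G_{p+2} is disjoint from Z(D). Then the minimum distance of D equals exactly 2p. -/

import Mathlib

open scoped BigOperators

namespace LRC

open Fin.NatCast

/-- Hamming weight of a vector. -/
noncomputable def hwt {n : ℕ} {F : Type*} [Zero F] (c : Fin n → F) : ℕ :=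
  Nat.card {i : Fin n // c i ≠ 0}

/-- A linear code is cyclic if it is closed under the cyclic shift of coordinates. -/
def IsCyclicCode {n : ℕ} [NeZero n] {F : Type*} [Field F] (C : Submodule F (Fin n → F)) : Prop :=
  ∀ c ∈ C, (fun i : Fin n => c (i - 1)) ∈ C

/-- `A` is a recovery set for coordinate `i` of the code `C`. -/
def IsRecoverySet {n : ℕ} {F : Type*} [Field F] (C : Submodule F (Fin n → F)) (i : Fin n)
    (A : Finset (Fin n)) : Prop :=
  i ∉ A ∧ ∃ φ : ((j : A) → F) → F, ∀ c ∈ C, c i = φ (fun j => c j)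

/-- The code `C` has locality `r`. -/
def HasLocality {n : ℕ} {F : Type*} [Field F] (C : Submodule F (Fin n → F)) (r : ℕ) : Prop :=
  ∀ i : Fin n, ∃ A : Finset (Fin n), A.card ≤ r ∧ IsRecoverySet C i A

/-- Complete defining set of zeros of a cyclic code (locator field = symbol field). -/
def definingSet {n : ℕ} {F : Type*} [Field F] (C : Submodule F (Fin n → F)) : Set F :=
  {β | β ^ n = 1 ∧ ∀ c ∈ C, ∑ j : Fin n, c j * β ^ (j : ℕ) = 0}

/-- Complete defining set of zeros of a cyclic code in an extension (locator) field `K`. -/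
def definingSetExt (n : ℕ) {F K : Type*} [Field F] [Field K] [Algebra F K]
    (C : Submodule F (Fin n → F)) : Set K :=
  {β | β ^ n = 1 ∧ ∀ c ∈ C, ∑ j : Fin n, algebraMap F K (c j) * β ^ (j : ℕ) = 0}

/-- The cyclic code with a given set of zeros. -/
def codeOfZeros (n : ℕ) {F : Type*} [Field F] (Z : Set F) : Submodule F (Fin n → F) where
  carrier := {c | ∀ β ∈ Z, ∑ j : Fin n, c j * β ^ (j : ℕ) = 0}
  add_mem' := by
    intro a b ha hb β hβ
    have h1 := ha β hβ
    have h2 := hb β hβ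
    calc ∑ j : Fin n, (a + b) j * β ^ (j : ℕ)
        = (∑ j : Fin n, a j * β ^ (j : ℕ)) + ∑ j : Fin n, b j * β ^ (j : ℕ) := by
          rw [← Finset.sum_add_distrib]
          exact Finset.sum_congr rfl (by intro j _; simp [add_mul])
      _ = 0 := by rw [h1, h2, add_zero]
  zero_mem' := by intro β hβ; simp
  smul_mem' := by
    intro t a ha β hβ
    have h1 := ha β hβ
    calc ∑ j : Fin n, (t • a) j * β ^ (j : ℕ)
        = t * ∑ j : Fin n, a j * β ^ (j : ℕ) := by
          rw [Finset.mul_sum]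
          exact Finset.sum_congr rfl (by intro j _; simp [mul_assoc])
      _ = 0 := by rw [h1, mul_zero]

/-- Minimum distance: least Hamming weight of a nonzero codeword. -/
noncomputable def minDist {n : ℕ} {F : Type*} [Field F] (C : Submodule F (Fin n → F)) : ℕ :=
  sInf {w | ∃ c ∈ C, c ≠ 0 ∧ hwt c = w}

/-- The dual code under the standard bilinear form. -/
def dualCode {n : ℕ} {F : Type*} [Field F] (C : Submodule F (Fin n → F)) :
    Submodule F (Fin n → F) where
  carrier := {y | ∀ c ∈ C, ∑ i : Fin n, c i * y i = 0}
  add_mem' := by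
    intro a b ha hb c hc
    have h1 := ha c hc
    have h2 := hb c hc
    calc ∑ i : Fin n, c i * (a + b) i
        = (∑ i : Fin n, c i * a i) + ∑ i : Fin n, c i * b i := by
          rw [← Finset.sum_add_distrib]
          exact Finset.sum_congr rfl (by intro j _; simp [mul_add])
      _ = 0 := by rw [h1, h2, add_zero]
  zero_mem' := by intro c hc; simp
  smul_mem' := by
    intro t a ha c hc
    have h1 := ha c hc
    calc ∑ i : Fin n, c i * (t • a) i
        = t * ∑ i : Fin n, c i * a i := by
          rw [Finset.mul_sum]
          exact Finset.sum_congr rfl (by intro j _; simp [mul_assoc]; ring)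
      _ = 0 := by rw [h1, mul_zero]



open scoped symmDiff

/-- The coset `α^l G_m` of the subgroup `G_m = {α^{jm}}` of the n-th roots of unity. -/
def coset {F : Type*} [Field F] (α : F) (n : ℕ) (l : ℤ) (m : ℕ) : Set F :=
  {β | ∃ j : ℕ, j < n / m ∧ β = α ^ (l + (j : ℤ) * m)}

/-- L1: Vandermonde injectivity of evaluations. -/
lemma vand_inj {F : Type*} [Field F] {w : ℕ} (x : Fin w → F) (hx : Function.Injective x)
    (v : Fin w → F) (h : ∀ k : Fin w, ∑ j, v j * x j ^ (k : ℕ) = 0) : v = 0 := by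
  classical
  have hdet : (Matrix.vandermonde x).det ≠ 0 := by
    rw [Matrix.det_vandermonde_ne_zero_iff]; exact hx
  refine Matrix.eq_zero_of_vecMul_eq_zero hdet ?_
  funext k
  simpa [Matrix.vecMul, dotProduct, Matrix.vandermonde] using h k

/-- Evaluation of a word at a point, as a linear map. -/
def evalLM (n : ℕ) {F : Type*} [Field F] (β : F) : (Fin n → F) →ₗ[F] F where
  toFun c := ∑ j : Fin n, c j * β ^ (j : ℕ)
  map_add' a b := by simp [add_mul, Finset.sum_add_distrib]
  map_smul' t a := by simp [Finset.mul_sum, mul_assoc]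

lemma evalLM_apply {n : ℕ} {F : Type*} [Field F] (β : F) (c : Fin n → F) :
    evalLM n β c = ∑ j : Fin n, c j * β ^ (j : ℕ) := rfl

/-- evaluation injectivity at powers of a primitive root -/
lemma eval_inj {F : Type*} [Field F] {n : ℕ} {α : F} (hα : IsPrimitiveRoot α n)
    (c : Fin n → F) (h : ∀ t : Fin n, evalLM n (α ^ (t : ℕ)) c = 0) : c = 0 := by
  have hinj : Function.Injective (fun t : Fin n => α ^ (t : ℕ)) := by
    intro a b hab
    exact Fin.ext (hα.pow_inj a.isLt b.isLt hab)
  refine vand_inj _ hinj c ?_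
  intro k
  have := h k
  rw [evalLM_apply] at this
  rw [← this]
  refine Finset.sum_congr rfl fun j _ => ?_
  rw [← pow_mul, ← pow_mul, mul_comm (j : ℕ)]

open Classical in
/-- geometric sum of a root of unity -/
lemma geom_root {F : Type*} [Field F] {m : ℕ} {β : F} (hβ : β ^ m = 1) :
    (∑ t ∈ Finset.range m, β ^ t) = if β = 1 then (m : F) else 0 := by
  split_ifs with h
  · simp [h]
  · have h2 : (∑ t ∈ Finset.range m, β ^ t) * (β - 1) = 0 := by
      rw [geom_sum_mul, hβ, sub_self]
    rcases mul_eq_zero.mp h2 with h3 | h3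
    · exact h3
    · exact absurd (sub_eq_zero.mp h3) h

lemma pow_mod_eq {F : Type*} [Field F] {n : ℕ} {β : F} (hβ : β ^ n = 1) (a : ℕ) :
    β ^ (a % n) = β ^ a := by
  conv_rhs => rw [← Nat.div_add_mod a n]
  rw [pow_add, pow_mul, hβ, one_pow, one_mul]

lemma shift_mem {F : Type*} [Field F] {n : ℕ} [NeZero n] {D : Submodule F (Fin n → F)}
    (hcyc : IsCyclicCode D) {d : Fin n → F} (hd : d ∈ D) (k : ℕ) :
    (fun i : Fin n => d (i - (k : Fin n))) ∈ D := by
  induction k with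
  | zero => simpa using hd
  | succ m ih =>
      have h2 := hcyc _ ih
      have heq : (fun i : Fin n => d (i - 1 - (m : Fin n))) =
          (fun i : Fin n => d (i - ((m + 1 : ℕ) : Fin n))) := by
        funext i
        congr 1
        push_cast
        rw [sub_sub, add_comm]
      exact heq ▸ h2

lemma eval_shift {F : Type*} [Field F] {n : ℕ} [NeZero n] {β : F} (hβ : β ^ n = 1)
    (d : Fin n → F) (s : Fin n) :
    evalLM n β (fun i : Fin n => d (i - s)) = β ^ (s : ℕ) * evalLM n β d := by
  rw [evalLM_apply, evalLM_apply, Finset.mul_sum]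
  have key : ∀ j : Fin n, β ^ (s : ℕ) * (d j * β ^ (j : ℕ))
      = d ((j + s) - s) * β ^ (((j + s : Fin n)) : ℕ) := by
    intro j
    rw [add_sub_cancel_right]
    have hval : ((j + s : Fin n) : ℕ) = ((j : ℕ) + (s : ℕ)) % n := Fin.val_add j s
    rw [hval, pow_mod_eq hβ, pow_add]
    ring
  exact (Fintype.sum_bijective (fun j : Fin n => j + s)
    (Equiv.addRight s).bijective _ _ key).symm
lemma root_pow_n {F : Type*} [Field F] {n : ℕ} {α : F} (hα : IsPrimitiveRoot α n) (t : ℕ) :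
    (α ^ t) ^ n = 1 := by
  rw [← pow_mul, mul_comm, pow_mul, hα.pow_eq_one, one_pow]

lemma root_ne_zero {F : Type*} [Field F] {n : ℕ} [NeZero n] {γ : F} (hγn : γ ^ n = 1) :
    γ ≠ 0 := by
  intro h
  rw [h, zero_pow (NeZero.ne n)] at hγn
  exact zero_ne_one hγn

open Classical in
lemma unit_vec_mem {F : Type*} [Field F] {n : ℕ} [NeZero n] {α : F}
    (hα : IsPrimitiveRoot α n) {D : Submodule F (Fin n → F)} (hcyc : IsCyclicCode D)
    {γ : F} (hγn : γ ^ n = 1) (hγ : γ ∉ definingSet D) :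
    (fun j : Fin n => (γ⁻¹) ^ (j : ℕ)) ∈ D := by
  have hγ0 : γ ≠ 0 := root_ne_zero hγn
  obtain ⟨d, hd, hdγ⟩ : ∃ d ∈ D, evalLM n γ d ≠ 0 := by
    by_contra h
    push_neg at h
    exact hγ ⟨hγn, fun c hc => h c hc⟩
  set d' : Fin n → F := ∑ k ∈ Finset.range n, ((γ⁻¹) ^ k) • (fun i : Fin n => d (i - (k : Fin n)))
    with hd'
  have hd'D : d' ∈ D :=
    Submodule.sum_mem D fun k _ => Submodule.smul_mem D _ (shift_mem hcyc hd k)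
  have key : d' = (evalLM n γ d) • (fun j : Fin n => (γ⁻¹) ^ (j : ℕ)) := by
    rw [← sub_eq_zero]
    refine eval_inj hα _ fun t => ?_
    have hβn : (α ^ (t : ℕ)) ^ n = 1 := root_pow_n hα (t : ℕ)
    have hgeom : (∑ k ∈ Finset.range n, (γ⁻¹ * α ^ (t : ℕ)) ^ k)
        = if γ⁻¹ * α ^ (t : ℕ) = 1 then (n : F) else 0 :=
      geom_root (by rw [mul_pow, hβn, inv_pow, hγn, inv_one, one_mul])
    have h1 : evalLM n (α ^ (t : ℕ)) d' =
        evalLM n (α ^ (t : ℕ)) d * (if γ⁻¹ * α ^ (t : ℕ) = 1 then (n : F) else 0) := by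
      rw [hd', map_sum, ← hgeom, Finset.mul_sum]
      refine Finset.sum_congr rfl fun k hk => ?_
      rw [map_smul, smul_eq_mul, eval_shift hβn]
      have hkv : ((k : Fin n) : ℕ) = k % n := Fin.val_natCast k n
      rw [hkv, pow_mod_eq hβn, mul_pow]
      ring
    have h2 : evalLM n (α ^ (t : ℕ)) ((evalLM n γ d) • (fun j : Fin n => (γ⁻¹) ^ (j : ℕ)))
        = evalLM n γ d * (if γ⁻¹ * α ^ (t : ℕ) = 1 then (n : F) else 0) := by
      rw [map_smul, smul_eq_mul]
      congr 1
      rw [evalLM_apply,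
        Fin.sum_univ_eq_sum_range (fun j => γ⁻¹ ^ j * (α ^ (t : ℕ)) ^ j), ← hgeom]
      exact Finset.sum_congr rfl fun k _ => (mul_pow _ _ _).symm
    rw [map_sub, h1, h2]
    by_cases hcase : γ⁻¹ * α ^ (t : ℕ) = 1
    · have hβγ : α ^ (t : ℕ) = γ := by
        field_simp at hcase
        rw [hcase]
      rw [hβγ, sub_self]
    · simp [hcase]
  have hfinal : (fun j : Fin n => (γ⁻¹) ^ (j : ℕ)) = (evalLM n γ d)⁻¹ • d' := by
    rw [key, inv_smul_smul₀ hdγ]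
  rw [hfinal]
  exact Submodule.smul_mem D _ hd'D

open Classical in
lemma mem_of_vanishing {F : Type*} [Field F] {n : ℕ} [NeZero n] {α : F}
    (hα : IsPrimitiveRoot α n) (hnF : (n : F) ≠ 0)
    {D : Submodule F (Fin n → F)} (hcyc : IsCyclicCode D)
    {c : Fin n → F} (hc : ∀ β ∈ definingSet D, evalLM n β c = 0) : c ∈ D := by
  set T : Finset (Fin n) := Finset.univ.filter (fun t => α ^ (t : ℕ) ∉ definingSet D) with hT
  set c' : Fin n → F :=
      ∑ t ∈ T, ((n : F)⁻¹ * evalLM n (α ^ (t : ℕ)) c) •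
        (fun j : Fin n => ((α ^ (t : ℕ))⁻¹) ^ (j : ℕ)) with hc'
  have hc'D : c' ∈ D := by
    refine Submodule.sum_mem D fun t ht => Submodule.smul_mem D _ ?_
    exact unit_vec_mem hα hcyc (root_pow_n hα (t : ℕ)) (Finset.mem_filter.mp ht).2
  have key : c = c' := by
    rw [← sub_eq_zero]
    refine eval_inj hα _ fun s => ?_
    have hβn : (α ^ (s : ℕ)) ^ n = 1 := root_pow_n hα (s : ℕ)
    have heval : ∀ t : Fin n,
        evalLM n (α ^ (s : ℕ)) (fun j : Fin n => ((α ^ (t : ℕ))⁻¹) ^ (j : ℕ))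
        = if s = t then (n : F) else 0 := by
      intro t
      have hγ0 : α ^ (t : ℕ) ≠ 0 := root_ne_zero (root_pow_n hα (t : ℕ))
      have hgeom : (∑ k ∈ Finset.range n, ((α ^ (t : ℕ))⁻¹ * α ^ (s : ℕ)) ^ k)
          = if (α ^ (t : ℕ))⁻¹ * α ^ (s : ℕ) = 1 then (n : F) else 0 :=
        geom_root (by rw [mul_pow, hβn, inv_pow, root_pow_n hα (t : ℕ), inv_one, one_mul])
      have hst : ((α ^ (t : ℕ))⁻¹ * α ^ (s : ℕ) = 1) ↔ s = t := by
        constructor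
        · intro h
          have hβγ : α ^ (s : ℕ) = α ^ (t : ℕ) := by
            field_simp at h
            rw [h]
          exact Fin.ext (hα.pow_inj s.isLt t.isLt hβγ)
        · intro h
          rw [h]
          exact inv_mul_cancel₀ hγ0
      rw [evalLM_apply,
        Fin.sum_univ_eq_sum_range (fun j => ((α ^ (t : ℕ))⁻¹) ^ j * (α ^ (s : ℕ)) ^ j)]
      rw [Finset.sum_congr rfl fun k _ => (mul_pow ((α ^ (t : ℕ))⁻¹) (α ^ (s : ℕ)) k).symm,
        hgeom]
      simp only [hst]
    have hc'eval : evalLM n (α ^ (s : ℕ)) c'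
        = if s ∈ T then evalLM n (α ^ (s : ℕ)) c else 0 := by
      rw [hc', map_sum]
      have hterm : ∀ t ∈ T, evalLM n (α ^ (s : ℕ))
          (((n : F)⁻¹ * evalLM n (α ^ (t : ℕ)) c) •
            (fun j : Fin n => ((α ^ (t : ℕ))⁻¹) ^ (j : ℕ)))
          = if s = t then evalLM n (α ^ (s : ℕ)) c else 0 := by
        intro t ht
        rw [map_smul, smul_eq_mul, heval t]
        by_cases h : s = t
        · subst h
          rw [if_pos rfl, if_pos rfl]
          field_simp
        · rw [if_neg h, if_neg h, mul_zero]
      rw [Finset.sum_congr rfl hterm]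
      by_cases hs : s ∈ T
      · rw [Finset.sum_eq_single_of_mem s hs (fun t _ hts => if_neg fun h => hts h.symm),
          if_pos rfl, if_pos hs]
      · rw [if_neg hs]
        refine Finset.sum_eq_zero fun t ht => if_neg fun h => hs (by rw [h]; exact ht)
    rw [map_sub, hc'eval]
    by_cases hs : s ∈ T
    · rw [if_pos hs, sub_self]
    · rw [if_neg hs, sub_zero]
      refine hc _ ?_
      by_contra h
      exact hs (Finset.mem_filter.mpr ⟨Finset.mem_univ s, h⟩)
  rw [key]
  exact hc'D
open Classical in
/-- BCH bound: `m` consecutive zeros force weight `> m` for nonzero codewords. -/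
lemma bch_bound {F : Type*} [Field F] {n : ℕ} [NeZero n] {α : F}
    (hα : IsPrimitiveRoot α n) {D : Submodule F (Fin n → F)} (m : ℕ) (a : ℤ)
    (hz : ∀ k : ℕ, k < m → ∀ d ∈ D, evalLM n (α ^ (a + (k : ℤ))) d = 0)
    {c : Fin n → F} (hcD : c ∈ D) (hc0 : c ≠ 0) : m < hwt c := by
  have hα0 : α ≠ 0 := root_ne_zero hα.pow_eq_one
  by_contra hcon
  push_neg at hcon
  set S : Finset (Fin n) := Finset.univ.filter (fun i => c i ≠ 0) with hS
  have hwtS : hwt c = S.card := by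
    rw [hwt, Nat.card_eq_fintype_card, Fintype.card_subtype]
  set w := S.card with hw
  set g : Fin w → Fin n := fun j => ((S.equivFin.symm j : S) : Fin n) with hg
  have hginj : Function.Injective g := by
    intro a b hab
    exact S.equivFin.symm.injective (Subtype.ext hab)
  have hgS : ∀ j, g j ∈ S := fun j => (S.equivFin.symm j).2
  set x : Fin w → F := fun j => α ^ ((g j : ℕ)) with hx
  have hxinj : Function.Injective x := by
    intro a b hab
    exact hginj (Fin.ext (hα.pow_inj (g a).isLt (g b).isLt hab))
  set v : Fin w → F := fun j => c (g j) * α ^ (a * ((g j : ℕ) : ℤ)) with hv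
  have hzero : ∀ k : Fin w, ∑ j, v j * x j ^ (k : ℕ) = 0 := by
    intro k
    have hk : (k : ℕ) < m := lt_of_lt_of_le (k.isLt) (hwtS ▸ hcon)
    have h0 := hz (k : ℕ) hk c hcD
    rw [evalLM_apply] at h0
    have hrestrict : ∑ i : Fin n, c i * (α ^ (a + ((k : ℕ) : ℤ))) ^ (i : ℕ)
        = ∑ i ∈ S, c i * (α ^ (a + ((k : ℕ) : ℤ))) ^ (i : ℕ) := by
      refine (Finset.sum_subset S.subset_univ fun i _ hi => ?_).symm
      have : c i = 0 := by
        by_contra hci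
        exact hi (Finset.mem_filter.mpr ⟨Finset.mem_univ i, hci⟩)
      rw [this, zero_mul]
    have hreindex : ∑ i ∈ S, c i * (α ^ (a + ((k : ℕ) : ℤ))) ^ (i : ℕ)
        = ∑ j : Fin w, c (g j) * (α ^ (a + ((k : ℕ) : ℤ))) ^ ((g j : ℕ)) := by
      rw [← Finset.sum_coe_sort S (fun i => c i * (α ^ (a + ((k : ℕ) : ℤ))) ^ (i : ℕ))]
      exact Fintype.sum_equiv S.equivFin.symm _ _ (fun i => rfl) |>.symm
    have hterm : ∀ j : Fin w,
        c (g j) * (α ^ (a + ((k : ℕ) : ℤ))) ^ ((g j : ℕ)) = v j * x j ^ (k : ℕ) := by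
      intro j
      have hrfl : v j * x j ^ (k : ℕ)
          = c (g j) * α ^ (a * ((g j : ℕ) : ℤ)) * (α ^ ((g j : ℕ))) ^ ((k : ℕ)) := rfl
      rw [hrfl]
      have e1 : (α ^ ((g j : ℕ))) ^ ((k : ℕ)) = α ^ ((((g j : ℕ)) : ℤ) * (((k : ℕ)) : ℤ)) := by
        rw [← zpow_natCast α (g j : ℕ), ← zpow_natCast (α ^ ((g j : ℕ) : ℤ)) (k : ℕ), ← zpow_mul]
      have e0 : (α ^ (a + ((k : ℕ) : ℤ))) ^ ((g j : ℕ))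
          = α ^ ((a + ((k : ℕ) : ℤ)) * ((g j : ℕ) : ℤ)) := by
        rw [← zpow_natCast (α ^ (a + ((k : ℕ) : ℤ))) (g j : ℕ), ← zpow_mul]
      have e2 : (a + ((k : ℕ) : ℤ)) * ((g j : ℕ) : ℤ)
          = a * ((g j : ℕ) : ℤ) + ((g j : ℕ) : ℤ) * ((k : ℕ) : ℤ) := by ring
      rw [e0, e1, e2, zpow_add₀ hα0, mul_assoc]
    rw [hrestrict, hreindex] at h0
    rw [← h0]
    exact (Finset.sum_congr rfl fun j _ => hterm j).symm
  have hv0 := vand_inj x hxinj v hzero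
  obtain ⟨i, hci⟩ : ∃ i, c i ≠ 0 := by
    by_contra h
    push_neg at h
    exact hc0 (funext h)
  have hiS : i ∈ S := Finset.mem_filter.mpr ⟨Finset.mem_univ i, hci⟩
  set j := S.equivFin ⟨i, hiS⟩ with hj
  have hgj : g j = i := by simp [hg, hj]
  have hvj : v j = 0 := by rw [hv0]; rfl
  have h2 : c i * α ^ (a * ((i : ℕ) : ℤ)) = 0 := by
    have : c (g j) * α ^ (a * ((g j : ℕ) : ℤ)) = 0 := hvj
    rwa [hgj] at this
  rcases mul_eq_zero.mp h2 with h | h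
  · exact hci h
  · exact zpow_ne_zero _ hα0 h
open Classical in
lemma sum_multiples {M : Type*} [AddCommMonoid M] {n d : ℕ} [NeZero n] (hd : d ∣ n)
    (f : ℕ → M) :
    ∑ i ∈ Finset.univ.filter (fun i : Fin n => d ∣ (i : ℕ)), f (i : ℕ)
      = ∑ j ∈ Finset.range (n / d), f (j * d) := by
  have hd0 : 0 < d := Nat.pos_of_dvd_of_pos hd (NeZero.pos n)
  have hbound : ∀ j ∈ Finset.range (n / d), j * d < n := by
    intro j hj
    rw [Finset.mem_range] at hj
    have := (Nat.lt_div_iff_mul_lt' hd j).mp hj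
    rw [mul_comm]
    exact this
  refine Finset.sum_nbij' (fun i => (i : ℕ) / d)
    (fun j => (⟨j * d % n, Nat.mod_lt _ (NeZero.pos n)⟩ : Fin n)) ?_ ?_ ?_ ?_ ?_
  · intro i hi
    rw [Finset.mem_range, Nat.lt_div_iff_mul_lt' hd, mul_comm,
      Nat.div_mul_cancel (Finset.mem_filter.mp hi).2]
    exact i.isLt
  · intro j hj
    refine Finset.mem_filter.mpr ⟨Finset.mem_univ _, ?_⟩
    simp only
    rw [Nat.mod_eq_of_lt (hbound j hj)]
    exact ⟨j, mul_comm j d⟩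
  · intro i hi
    refine Fin.ext ?_
    simp only
    rw [Nat.div_mul_cancel (Finset.mem_filter.mp hi).2, Nat.mod_eq_of_lt i.isLt]
  · intro j hj
    simp only
    rw [Nat.mod_eq_of_lt (hbound j hj), Nat.mul_div_cancel _ hd0]
  · intro i hi
    rw [Nat.div_mul_cancel (Finset.mem_filter.mp hi).2]

open Classical in
lemma card_multiples_fin {n d : ℕ} [NeZero n] (hd : d ∣ n) :
    (Finset.univ.filter (fun i : Fin n => d ∣ (i : ℕ))).card = n / d := by
  rw [Finset.card_eq_sum_ones, sum_multiples hd (fun _ => 1), Finset.sum_const,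
    Finset.card_range, smul_eq_mul, mul_one]
open Classical in
/-- The explicit weight-`2p` word. -/
noncomputable def specialWord (n p : ℕ) (F : Type*) [Field F] : Fin n → F := fun i =>
  (if n / p ∣ (i : ℕ) then 1 else 0) + (if n / (p + 2) ∣ (i : ℕ) then 1 else 0)

open Classical in
lemma eval_specialWord {F : Type*} [Field F] {n p : ℕ} [NeZero n]
    (hpn : p ∣ n) (hp2n : (p + 2) ∣ n) {β : F} (hβ : β ^ n = 1) :
    evalLM n β (specialWord n p F)
      = (if β ^ (n / p) = 1 then ((n / (n / p) : ℕ) : F) else 0)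
        + (if β ^ (n / (p + 2)) = 1 then ((n / (n / (p + 2)) : ℕ) : F) else 0) := by
  have key : ∀ d : ℕ, d ∣ n →
      ∑ i : Fin n, (if d ∣ (i : ℕ) then (1 : F) else 0) * β ^ (i : ℕ)
        = if β ^ d = 1 then ((n / d : ℕ) : F) else 0 := by
    intro d hd
    have h1 : ∑ i : Fin n, (if d ∣ (i : ℕ) then (1 : F) else 0) * β ^ (i : ℕ)
        = ∑ i ∈ Finset.univ.filter (fun i : Fin n => d ∣ (i : ℕ)), β ^ (i : ℕ) := by
      rw [Finset.sum_filter]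
      refine Finset.sum_congr rfl fun i _ => ?_
      by_cases h : d ∣ (i : ℕ) <;> simp [h]
    rw [h1, sum_multiples hd (fun a => β ^ a)]
    have h2 : ∀ j, β ^ (j * d) = (β ^ d) ^ j := fun j => by
      rw [← pow_mul, mul_comm]
    rw [Finset.sum_congr rfl fun j _ => h2 j]
    refine geom_root ?_
    rw [← pow_mul, Nat.mul_div_cancel' hd, hβ]
  rw [evalLM_apply]
  have : ∀ i : Fin n, specialWord n p F i * β ^ (i : ℕ)
      = (if n / p ∣ (i : ℕ) then (1 : F) else 0) * β ^ (i : ℕ)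
        + (if n / (p + 2) ∣ (i : ℕ) then (1 : F) else 0) * β ^ (i : ℕ) := by
    intro i
    rw [specialWord, add_mul]
  rw [Finset.sum_congr rfl fun i _ => this i, Finset.sum_add_distrib,
    key _ (Nat.div_dvd_of_dvd hpn), key _ (Nat.div_dvd_of_dvd hp2n)]

lemma coprime_p_p2 {p : ℕ} (hodd : Odd p) : Nat.Coprime p (p + 2) := by
  have : p + 2 = 2 + p := by ring
  rw [this, Nat.coprime_add_self_right]
  exact hodd.coprime_two_right

/-- arithmetic: both divisibilities iff `n ∣ i`. -/
lemma both_dvd_iff {n p : ℕ} [NeZero n] (hp : 0 < p) (hodd : Odd p)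
    (hpn : p ∣ n) (hp2n : (p + 2) ∣ n) (i : ℕ) :
    (n / p ∣ i ∧ n / (p + 2) ∣ i) ↔ n ∣ i := by
  have hpp : p * (p + 2) ∣ n := (coprime_p_p2 hodd).mul_dvd_of_dvd_of_dvd hpn hp2n
  obtain ⟨m, hm⟩ := hpp
  have hd1 : n / p = (p + 2) * m := by
    rw [hm, mul_assoc, Nat.mul_div_cancel_left _ hp]
  have hd2 : n / (p + 2) = p * m := by
    rw [hm, mul_comm p (p + 2), mul_assoc, Nat.mul_div_cancel_left _ (by omega : 0 < p + 2)]
  have hlcm : Nat.lcm (n / p) (n / (p + 2)) = n := by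
    rw [hd1, hd2, mul_comm (p + 2) m, mul_comm p m, Nat.lcm_mul_left,
      ((coprime_p_p2 hodd).symm.lcm_eq_mul), hm]
    ring
  rw [hd1, hd2, ← Nat.lcm_dvd_iff, ← hd1, ← hd2, hlcm]
open Classical in
lemma hwt_specialWord {F : Type*} [Field F] [CharP F 2] {n p : ℕ} [NeZero n]
    (hp : 0 < p) (hodd : Odd p) (hpn : p ∣ n) (hp2n : (p + 2) ∣ n) :
    hwt (specialWord n p F) = 2 * p := by
  have h2 : (1 : F) + 1 = 0 := by
    rw [one_add_one_eq_two]
    exact_mod_cast CharP.cast_eq_zero F 2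
  set A : Finset (Fin n) := Finset.univ.filter (fun i : Fin n => n / p ∣ (i : ℕ)) with hA
  set B : Finset (Fin n) := Finset.univ.filter (fun i : Fin n => n / (p + 2) ∣ (i : ℕ)) with hB
  have hsupp : Finset.univ.filter (fun i : Fin n => specialWord n p F i ≠ 0)
      = (A \ B) ∪ (B \ A) := by
    ext i
    rw [Finset.mem_filter]
    simp only [Finset.mem_filter, Finset.mem_univ, true_and, Finset.mem_union,
      Finset.mem_sdiff, hA, hB, specialWord]
    by_cases h1 : n / p ∣ (i : ℕ) <;> by_cases hb : n / (p + 2) ∣ (i : ℕ) <;>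
      simp [h1, hb, h2]
  have hAB : A ∩ B = {(0 : Fin n)} := by
    ext i
    simp only [Finset.mem_inter, Finset.mem_filter, Finset.mem_univ, true_and,
      Finset.mem_singleton, hA, hB]
    rw [both_dvd_iff hp hodd hpn hp2n]
    constructor
    · intro h
      exact Fin.ext (by simpa using Nat.eq_zero_of_dvd_of_lt h i.isLt)
    · intro h
      rw [h]
      exact Dvd.intro 0 rfl
  have hcardA : A.card = p := by
    rw [hA, card_multiples_fin (Nat.div_dvd_of_dvd hpn), Nat.div_div_self hpn (NeZero.ne n)]
  have hcardB : B.card = p + 2 := by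
    rw [hB, card_multiples_fin (Nat.div_dvd_of_dvd hp2n), Nat.div_div_self hp2n (NeZero.ne n)]
  have hcardAB : (A ∩ B).card = 1 := by rw [hAB, Finset.card_singleton]
  have hdis : Disjoint (A \ B) (B \ A) := disjoint_sdiff_sdiff
  have e1 : (A \ B).card + (A ∩ B).card = A.card := Finset.card_sdiff_add_card_inter A B
  have e2 : (B \ A).card + (B ∩ A).card = B.card := Finset.card_sdiff_add_card_inter B A
  rw [Finset.inter_comm] at e2
  have : hwt (specialWord n p F) = ((A \ B) ∪ (B \ A)).card := by
    rw [hwt, Nat.card_eq_fintype_card, Fintype.card_subtype, hsupp]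
  rw [this, Finset.card_union_of_disjoint hdis]
  omega

lemma coset_mem_iff {F : Type*} [Field F] {n p : ℕ} [NeZero n] {α : F}
    (hα : IsPrimitiveRoot α n) (hp : 0 < p) (hpn : p ∣ n) {β : F} (hβ : β ^ n = 1) :
    β ∈ coset α n 0 p ↔ β ^ (n / p) = 1 := by
  have hnp0 : 0 < n / p := Nat.div_pos (Nat.le_of_dvd (NeZero.pos n) hpn) hp
  constructor
  · rintro ⟨j, hj, rfl⟩
    have h1 : α ^ ((0 : ℤ) + (j : ℤ) * (p : ℤ)) = α ^ (j * p) := by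
      rw [zero_add, ← zpow_natCast α (j * p)]
      push_cast
      ring_nf
    rw [h1, ← pow_mul, mul_assoc, Nat.mul_div_cancel' hpn, pow_mul]
    exact root_pow_n hα j
  · intro h
    obtain ⟨k, hk, hke⟩ := hα.eq_pow_of_pow_eq_one hβ
    have h1 : α ^ (k * (n / p)) = 1 := by rw [pow_mul, hke, h]
    have h2 : n ∣ k * (n / p) := (hα.pow_eq_one_iff_dvd _).mp h1
    have h3 : p * (n / p) ∣ k * (n / p) := by rwa [Nat.mul_div_cancel' hpn]
    have h4 : p ∣ k := (Nat.mul_dvd_mul_iff_right hnp0).mp h3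
    obtain ⟨j, hjk⟩ := h4
    refine ⟨j, ?_, ?_⟩
    · have : p * j < p * (n / p) := by rwa [Nat.mul_div_cancel' hpn, ← hjk]
      exact Nat.lt_of_mul_lt_mul_left this
    · rw [← hke, hjk]
      rw [zero_add, ← zpow_natCast α (p * j)]
      push_cast
      ring_nf
/-- if the defining set of a nonzero cyclic code contains the `2p−1` consecutive
powers `α^i`, `l·p(p+2)−(p−1) ≤ i ≤ l·p(p+2)+(p−1)`, and is disjoint from `G_p ∆ G_{p+2}`,
then the minimum distance is exactly `2p`. -/
theorem stmt16 {F : Type*} [Field F] [Fintype F] (q n : ℕ) [NeZero n]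
    (hq : Fintype.card F = q) (hq2 : ∃ e : ℕ, 0 < e ∧ q = 2 ^ e) (hn : n ∣ q - 1)
    (α : F) (hα : IsPrimitiveRoot α n)
    (p : ℕ) (hp : 0 < p) (hpn : p ∣ n) (hp2n : (p + 2) ∣ n)
    (D : Submodule F (Fin n → F)) (hcyc : IsCyclicCode D) (hD : D ≠ ⊥)
    (l : ℤ)
    (hconsec : {β : F | ∃ i : ℤ, l * p * (p + 2) - (p - 1) ≤ i ∧ i ≤ l * p * (p + 2) + (p - 1) ∧
        β = α ^ i} ⊆ definingSet D)
    (hdisj : Disjoint (coset α n 0 p ∆ coset α n 0 (p + 2)) (definingSet D)) :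
    minDist D = 2 * p := by
  classical
  -- characteristic 2
  obtain ⟨e, he, hqe⟩ := hq2
  haveI hchar2 : CharP F 2 := by
    obtain ⟨k, hprime, hcard⟩ := FiniteField.card F (ringChar F)
    have hdvd : ringChar F ∣ 2 ^ e := by
      rw [← hqe, ← hq, hcard]
      exact dvd_pow_self _ (by exact_mod_cast k.ne_zero)
    have h2 : ringChar F = 2 :=
      (Nat.prime_dvd_prime_iff_eq hprime Nat.prime_two).mp (hprime.dvd_of_dvd_pow hdvd)
    exact h2 ▸ ringChar.charP F
  have hq2' : 2 ≤ q := by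
    rw [hqe]
    calc 2 = 2 ^ 1 := (pow_one 2).symm
    _ ≤ 2 ^ e := Nat.pow_le_pow_right (by norm_num) he
  have hqeven : 2 ∣ q := hqe ▸ dvd_pow_self 2 (by omega : e ≠ 0)
  have hnodd : ¬ (2 ∣ n) := by
    intro h
    have h1 : 2 ∣ q - 1 := h.trans hn
    omega
  have hoddp : Odd p := by
    rcases Nat.even_or_odd p with h | h
    · exact absurd (h.two_dvd.trans hpn) hnodd
    · exact h
  have hnF : (n : F) ≠ 0 := by
    rw [Ne, CharP.cast_eq_zero_iff F 2 n]
    exact hnodd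
  set W : Set ℕ := {w | ∃ c ∈ D, c ≠ 0 ∧ hwt c = w} with hW
  -- lower bound via BCH
  have hlow : ∀ w ∈ W, 2 * p ≤ w := by
    rintro w ⟨c, hcD, hc0, rfl⟩
    have hz : ∀ k : ℕ, k < 2 * p - 1 → ∀ d ∈ D,
        evalLM n (α ^ ((l * (p : ℤ) * ((p : ℤ) + 2) - ((p : ℤ) - 1)) + (k : ℤ))) d = 0 := by
      intro k hk d hd
      have hkb : (k : ℤ) ≤ 2 * (p : ℤ) - 2 := by
        have : (1 : ℕ) ≤ p := hp
        push_cast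
        omega
      have hβ : α ^ ((l * (p : ℤ) * ((p : ℤ) + 2) - ((p : ℤ) - 1)) + (k : ℤ)) ∈
          definingSet D := by
        refine hconsec ⟨(l * (p : ℤ) * ((p : ℤ) + 2) - ((p : ℤ) - 1)) + (k : ℤ), ?_, ?_, rfl⟩
        · have : (0 : ℤ) ≤ (k : ℤ) := Int.natCast_nonneg k
          linarith
        · linarith
      rw [evalLM_apply]
      exact hβ.2 d hd
    have hbch := bch_bound hα (2 * p - 1)
      (l * (p : ℤ) * ((p : ℤ) + 2) - ((p : ℤ) - 1)) hz hcD hc0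
    omega
  -- the explicit codeword
  have hspecD : specialWord n p F ∈ D := by
    refine mem_of_vanishing hα hnF hcyc ?_
    intro β hβ
    have hβn : β ^ n = 1 := hβ.1
    have hp2 : 0 < p + 2 := by omega
    rw [eval_specialWord hpn hp2n hβn, Nat.div_div_self hpn (NeZero.ne n),
      Nat.div_div_self hp2n (NeZero.ne n)]
    have hdiff : ∀ (h1 : β ^ (n / p) = 1) (h2 : ¬ β ^ (n / (p + 2)) = 1), False := by
      intro h1 h2
      have hm : β ∈ coset α n 0 p ∆ coset α n 0 (p + 2) :=
        Set.mem_symmDiff.mpr (Or.inl ⟨(coset_mem_iff hα hp hpn hβn).mpr h1,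
          fun hmem => h2 ((coset_mem_iff hα hp2 hp2n hβn).mp hmem)⟩)
      exact Set.disjoint_left.mp hdisj hm hβ
    have hdiff' : ∀ (h1 : ¬ β ^ (n / p) = 1) (h2 : β ^ (n / (p + 2)) = 1), False := by
      intro h1 h2
      have hm : β ∈ coset α n 0 p ∆ coset α n 0 (p + 2) :=
        Set.mem_symmDiff.mpr (Or.inr ⟨(coset_mem_iff hα hp2 hp2n hβn).mpr h2,
          fun hmem => h1 ((coset_mem_iff hα hp hpn hβn).mp hmem)⟩)
      exact Set.disjoint_left.mp hdisj hm hβ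
    by_cases h1 : β ^ (n / p) = 1 <;> by_cases h2 : β ^ (n / (p + 2)) = 1
    · rw [if_pos h1, if_pos h2]
      have hcast : ((p : F) + ((p + 2 : ℕ) : F)) = 2 * ((p : F) + 1) := by
        push_cast
        ring
      rw [hcast, show (2 : F) = ((2 : ℕ) : F) by norm_num, CharP.cast_eq_zero F 2, zero_mul]
    · exact absurd (hdiff h1 h2) not_false
    · exact absurd (hdiff' h1 h2) not_false
    · rw [if_neg h1, if_neg h2, add_zero]
  have hwtc : hwt (specialWord n p F) = 2 * p := hwt_specialWord hp hoddp hpn hp2n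
  have hc0 : specialWord n p F ≠ 0 := by
    intro h
    have hz : hwt (specialWord n p F) = 0 := by
      rw [h, hwt]
      simp
    omega
  have hmem : 2 * p ∈ W := ⟨specialWord n p F, hspecD, hc0, hwtc⟩
  rw [minDist, ← hW]
  exact le_antisymm (Nat.sInf_le hmem) (le_csInf ⟨2 * p, hmem⟩ hlow)

end LRC
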